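/- Let f, g be measurable real-valued functions on the circle S with ‖f‖_p < ∞ and ‖g‖_q < ∞ where 1/p + 1/q = 1, p, q ∈ [1, ∞]. Then ∫_S f(x) g(x) dx ≤ ∫_S f*(x) g*(x) dx, where f*, g* are the symmetric non-increasing rearrangements of f and g. -/

import Mathlib

open MeasureTheory Set Filter
open scoped ENNReal NNReal

noncomputable section

/-- The circle of circumference `1`, parametrised by the interval `(-1/2, 1/2]`. -/
def circ : Set ℝ := Set.Ioc (-(1/2) : ℝ) (1/2)

/-- Lebesgue measure on the circle. -/
def μc : Measure ℝ := volume.restrict circ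

/-- `f : ℝ → ℝ` is a symmetric non-increasing function on the circle. -/
structure SymNonInc (f : ℝ → ℝ) : Prop where
  symm : ∀ x ∈ Set.Ioo (-(1/2) : ℝ) (1/2), f (-x) = f x
  anti : AntitoneOn f (Set.Ico (0 : ℝ) (1/2))
  leftCont0 : ContinuousWithinAt f (Set.Iic (0 : ℝ)) 0
  leftCont : ∀ x ∈ Set.Ioo (0 : ℝ) (1/2), ContinuousWithinAt f (Set.Iic x) x
  rightContHalf : ContinuousWithinAt f (Set.Iic (1/2 : ℝ)) (1/2)

/-- `g` is the symmetric non-increasing rearrangement of `f`. -/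
def IsRearrangement (f g : ℝ → ℝ) : Prop :=
  SymNonInc g ∧ ∀ a : ℝ, μc {x | g x ≤ a} = μc {x | f x ≤ a}

/- ### Auxiliary lemmas -/

lemma circ_meas : MeasurableSet circ := measurableSet_Ioc

instance : IsProbabilityMeasure μc := by
  constructor
  rw [μc, Measure.restrict_apply_univ, circ, Real.volume_Ioc]
  norm_num

lemma μc_apply (S : Set ℝ) : μc S = volume (S ∩ circ) :=
  Measure.restrict_apply' circ_meas

lemma μc_inter_circ (S : Set ℝ) : μc (S ∩ circ) = μc S := by
  rw [μc_apply, μc_apply, inter_assoc, inter_self]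

lemma SymNonInc.le_of_mem_Ico {h : ℝ → ℝ} (H : SymNonInc h) {x : ℝ}
    (hx : x ∈ Ico (0:ℝ) (1/2)) : h (1/2) ≤ h x := by
  have tends : Tendsto h (nhdsWithin (1/2 : ℝ) (Iio (1/2))) (nhds (h (1/2))) :=
    H.rightContHalf.mono Iio_subset_Iic_self
  refine le_of_tendsto tends ?_
  filter_upwards [Ioo_mem_nhdsLT_of_mem (⟨hx.2, le_refl _⟩ : (1/2:ℝ) ∈ Ioc x (1/2))] with z hz
  exact H.anti ⟨hx.1, hx.2⟩ ⟨le_trans hx.1 hz.1.le, hz.2⟩ hz.1.le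

lemma SymNonInc.anti' {h : ℝ → ℝ} (H : SymNonInc h) : AntitoneOn h (Icc 0 (1/2)) := by
  intro x hx y hy hxy
  rcases eq_or_lt_of_le hy.2 with hy2 | hy2
  · rcases eq_or_lt_of_le hxy with rfl | hxy'
    · exact le_refl _
    · rw [hy2]
      exact H.le_of_mem_Ico ⟨hx.1, lt_of_lt_of_le hxy' hy.2⟩
  · exact H.anti ⟨hx.1, lt_of_le_of_lt hxy hy2⟩ ⟨hy.1, hy2⟩ hxy

lemma clamp_mem (x : ℝ) : min (max x 0) (1/2) ∈ Icc (0:ℝ) (1/2) :=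
  ⟨le_min (le_max_right _ _) (by norm_num), min_le_right _ _⟩

lemma SymNonInc.eq_on_circ {h : ℝ → ℝ} (H : SymNonInc h) {x : ℝ} (hx : x ∈ circ) :
    h x = h (min (max |x| 0) (1/2)) := by
  obtain ⟨hx1, hx2⟩ : -(1/2) < x ∧ x ≤ 1/2 := hx
  have habs : |x| ≤ 1/2 := abs_le.2 ⟨by linarith, hx2⟩
  rw [max_eq_left (abs_nonneg x), min_eq_left habs]
  rcases le_or_gt 0 x with h0 | h0
  · rw [abs_of_nonneg h0]
  · rw [abs_of_neg h0]
    exact (H.symm x ⟨hx1, by linarith⟩).symm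

lemma SymNonInc.aemeasurable {h : ℝ → ℝ} (H : SymNonInc h) : AEMeasurable h μc := by
  set k : ℝ → ℝ := fun x => h (min (max x 0) (1/2)) with hk
  have hanti : Antitone k := by
    intro x y hxy
    exact H.anti' (clamp_mem x) (clamp_mem y)
      (min_le_min (max_le_max hxy (le_refl _)) (le_refl _))
  have hae : (fun x => k |x|) =ᵐ[μc] h := by
    rw [μc]
    refine (ae_restrict_iff' circ_meas).2 (ae_of_all _ fun x hx => ?_)
    exact (H.eq_on_circ hx).symm
  exact (hanti.measurable.comp measurable_abs).aemeasurable.congr hae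

/- ### Nestedness of level sets -/

def UpClosed (Q : ℝ → Prop) : Prop := ∀ ⦃v w⦄, Q v → v ≤ w → Q w
def DownClosed (Q : ℝ → Prop) : Prop := ∀ ⦃v w⦄, Q v → w ≤ v → Q w

lemma nested_up {h₁ h₂ : ℝ → ℝ} {Q₁ Q₂ : ℝ → Prop} (H₁ : SymNonInc h₁) (H₂ : SymNonInc h₂)
    (u₁ : UpClosed Q₁) (u₂ : UpClosed Q₂) :
    {x | Q₁ (h₁ x)} ∩ circ ⊆ {x | Q₂ (h₂ x)} ∩ circ ∨
      {x | Q₂ (h₂ x)} ∩ circ ⊆ {x | Q₁ (h₁ x)} ∩ circ := by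
  have down : ∀ (h : ℝ → ℝ) (Q : ℝ → Prop), SymNonInc h → UpClosed Q →
      ∀ x ∈ Icc (0:ℝ) (1/2), ∀ y ∈ Icc (0:ℝ) (1/2), x ≤ y → Q (h y) → Q (h x) :=
    fun h Q H u x hx y hy hxy hQ => u hQ (H.anti' hx hy hxy)
  have circ_abs : ∀ x : ℝ, x ∈ circ → |x| ∈ Icc (0:ℝ) (1/2) := by
    intro x hx
    obtain ⟨hx1, hx2⟩ : -(1/2) < x ∧ x ≤ 1/2 := hx
    exact ⟨abs_nonneg x, abs_le.2 ⟨by linarith, hx2⟩⟩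
  have symm_abs : ∀ (h : ℝ → ℝ) (Q : ℝ → Prop), SymNonInc h →
      ∀ x : ℝ, x ∈ circ → (Q (h x) ↔ Q (h |x|)) := by
    intro h Q H x hx
    obtain ⟨hx1, hx2⟩ : -(1/2) < x ∧ x ≤ 1/2 := hx
    rcases le_or_gt 0 x with h0 | h0
    · rw [abs_of_nonneg h0]
    · rw [abs_of_neg h0, H.symm x ⟨hx1, by linarith⟩]
  by_cases hsub : ∀ y ∈ Icc (0:ℝ) (1/2), Q₁ (h₁ y) → Q₂ (h₂ y)
  · left
    rintro x ⟨hQ, hxc⟩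
    refine ⟨?_, hxc⟩
    have h1 : Q₁ (h₁ |x|) := (symm_abs h₁ Q₁ H₁ x hxc).1 hQ
    have h2 : Q₂ (h₂ |x|) := hsub _ (circ_abs x hxc) h1
    exact (symm_abs h₂ Q₂ H₂ x hxc).2 h2
  · right
    push_neg at hsub
    obtain ⟨y, hy, hQ₁y, hQ₂y⟩ := hsub
    rintro x ⟨hQ, hxc⟩
    refine ⟨?_, hxc⟩
    have h2 : Q₂ (h₂ |x|) := (symm_abs h₂ Q₂ H₂ x hxc).1 hQ
    have habs := circ_abs x hxc
    have h1 : Q₁ (h₁ |x|) := by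
      rcases le_total |x| y with hle | hle
      · exact down h₁ Q₁ H₁ u₁ _ habs _ hy hle hQ₁y
      · exact absurd (down h₂ Q₂ H₂ u₂ _ hy _ habs hle h2) hQ₂y
    exact (symm_abs h₁ Q₁ H₁ x hxc).2 h1

lemma nested_down {h₁ h₂ : ℝ → ℝ} {Q₁ Q₂ : ℝ → Prop} (H₁ : SymNonInc h₁) (H₂ : SymNonInc h₂)
    (u₁ : DownClosed Q₁) (u₂ : DownClosed Q₂) :
    {x | Q₁ (h₁ x)} ∩ circ ⊆ {x | Q₂ (h₂ x)} ∩ circ ∨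
      {x | Q₂ (h₂ x)} ∩ circ ⊆ {x | Q₁ (h₁ x)} ∩ circ := by
  have nu₁ : UpClosed (fun v => ¬ Q₁ v) := fun v w hv hvw hQ => hv (u₁ hQ hvw)
  have nu₂ : UpClosed (fun v => ¬ Q₂ v) := fun v w hv hvw hQ => hv (u₂ hQ hvw)
  have compl_eq : ∀ (h : ℝ → ℝ) (Q : ℝ → Prop),
      {x | Q (h x)} ∩ circ = circ \ ({x | ¬ Q (h x)} ∩ circ) := by
    intro h Q
    ext x
    by_cases hx : x ∈ circ <;> by_cases hq : Q (h x) <;>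
      simp [hx, hq, Set.mem_diff, Set.mem_inter_iff]
  rcases nested_up H₁ H₂ nu₁ nu₂ with hs | hs
  · right
    rw [compl_eq h₁ Q₁, compl_eq h₂ Q₂]
    exact diff_subset_diff_right hs
  · left
    rw [compl_eq h₁ Q₁, compl_eq h₂ Q₂]
    exact diff_subset_diff_right hs

lemma meas_inter_min {A B : Set ℝ} (hn : A ∩ circ ⊆ B ∩ circ ∨ B ∩ circ ⊆ A ∩ circ) :
    μc (A ∩ B) = min (μc A) (μc B) := by
  rw [← μc_inter_circ (A ∩ B), ← μc_inter_circ A, ← μc_inter_circ B]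
  have hi : A ∩ B ∩ circ = (A ∩ circ) ∩ (B ∩ circ) := by
    ext x; simp only [Set.mem_inter_iff]; tauto
  rw [hi]
  rcases hn with hs | hs
  · rw [inter_eq_left.2 hs, min_eq_left (measure_mono hs)]
  · rw [inter_eq_right.2 hs, min_eq_right (measure_mono hs)]

/- ### Distribution function transfer -/

section Distribution

variable {f fs : ℝ → ℝ}

lemma d_lt (hfsa : AEMeasurable fs μc)
    (hd : ∀ a : ℝ, μc {x | fs x ≤ a} = μc {x | f x ≤ a}) (a : ℝ) :
    μc {x | fs x < a} = μc {x | f x < a} := by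
  have hset : ∀ u : ℝ → ℝ, {x | u x < a} = ⋃ n : ℕ, {x | u x ≤ a - 1/(n+1)} := by
    intro u
    ext x
    simp only [Set.mem_setOf_eq, Set.mem_iUnion]
    constructor
    · intro hx
      obtain ⟨n, hn⟩ := exists_nat_one_div_lt (sub_pos.2 hx)
      exact ⟨n, by push_cast at hn ⊢; linarith⟩
    · rintro ⟨n, hn⟩
      have : (0:ℝ) < 1/(n+1) := by positivity
      linarith
  have hmono : ∀ u : ℝ → ℝ, Monotone (fun n : ℕ => {x | u x ≤ a - 1/(n+1)}) := by
    intro u n m hnm x hx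
    simp only [Set.mem_setOf_eq] at hx ⊢
    have h1 : (1:ℝ)/(m+1) ≤ 1/(n+1) := by
      apply one_div_le_one_div_of_le (by positivity)
      push_cast
      exact_mod_cast Nat.succ_le_succ hnm
    linarith
  rw [hset fs, hset f, Monotone.measure_iUnion (hmono fs), Monotone.measure_iUnion (hmono f)]
  exact iSup_congr fun n => hd _

lemma d_compl {S : Set ℝ} (hS : NullMeasurableSet S μc) :
    μc Sᶜ = 1 - μc S := by
  have h := measure_add_measure_compl₀ (μ := μc) hS
  rw [measure_univ] at h
  rw [← h, ENNReal.add_sub_cancel_left (measure_ne_top _ _)]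

lemma d_gt (hfsa : AEMeasurable fs μc) (hfa : AEMeasurable f μc)
    (hd : ∀ a : ℝ, μc {x | fs x ≤ a} = μc {x | f x ≤ a}) (a : ℝ) :
    μc {x | a < fs x} = μc {x | a < f x} := by
  have hn1 : NullMeasurableSet {x | fs x ≤ a} μc := by
    have he : {x | fs x ≤ a} = fs ⁻¹' Iic a := by ext x; simp
    rw [he]; exact hfsa.nullMeasurable measurableSet_Iic
  have hn2 : NullMeasurableSet {x | f x ≤ a} μc := by
    have he : {x | f x ≤ a} = f ⁻¹' Iic a := by ext x; simp
    rw [he]; exact hfa.nullMeasurable measurableSet_Iic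
  have h1 : {x | a < fs x} = {x | fs x ≤ a}ᶜ := by ext x; simp [not_le]
  have h2 : {x | a < f x} = {x | f x ≤ a}ᶜ := by ext x; simp [not_le]
  rw [h1, h2, d_compl hn1, d_compl hn2, hd a]

lemma d_ge (hfsa : AEMeasurable fs μc) (hfa : AEMeasurable f μc)
    (hd : ∀ a : ℝ, μc {x | fs x ≤ a} = μc {x | f x ≤ a}) (a : ℝ) :
    μc {x | a ≤ fs x} = μc {x | a ≤ f x} := by
  have h1 : {x | a ≤ fs x} = {x | fs x < a}ᶜ := by ext x; simp [not_lt]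
  have h2 : {x | a ≤ f x} = {x | f x < a}ᶜ := by ext x; simp [not_lt]
  have hn1 : NullMeasurableSet {x | fs x < a} μc := by
    have he : {x | fs x < a} = fs ⁻¹' Iio a := by ext x; simp
    rw [he]; exact hfsa.nullMeasurable measurableSet_Iio
  have hn2 : NullMeasurableSet {x | f x < a} μc := by
    have he : {x | f x < a} = f ⁻¹' Iio a := by ext x; simp
    rw [he]; exact hfa.nullMeasurable measurableSet_Iio
  rw [h1, h2, d_compl hn1, d_compl hn2, d_lt hfsa hd a]

end Distribution

/- ### Layer cake for products -/

lemma ofReal_max0 (a : ℝ) : ENNReal.ofReal (max a 0) = ENNReal.ofReal a := by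
  rcases le_total a 0 with h | h
  · rw [max_eq_right h, ENNReal.ofReal_of_nonpos h, ENNReal.ofReal_zero]
  · rw [max_eq_left h]

lemma single_layer {μ : Measure ℝ} {g : ℝ → ℝ} (hg : AEMeasurable g μ) :
    ∫⁻ x, ENNReal.ofReal (g x) ∂μ = ∫⁻ t in Ioi (0:ℝ), μ {x | t < g x} := by
  have h1 : ∫⁻ x, ENNReal.ofReal (g x) ∂μ = ∫⁻ x, ENNReal.ofReal (max (g x) 0) ∂μ :=
    lintegral_congr fun x => (ofReal_max0 (g x)).symm
  have hmax : AEMeasurable (fun x => max (g x) 0) μ := hg.max aemeasurable_const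
  rw [h1, lintegral_eq_lintegral_meas_lt μ (f := fun x => max (g x) 0)
    (ae_of_all _ fun x => le_max_right _ _) hmax]
  refine lintegral_congr_ae ((ae_restrict_iff' measurableSet_Ioi).2 (ae_of_all _ fun t ht => ?_))
  have ht' : (0:ℝ) < t := ht
  refine congrArg μ ?_
  ext x
  simp only [Set.mem_setOf_eq, lt_max_iff]
  exact ⟨fun h => h.resolve_right (fun h' => absurd ht' (by linarith)), Or.inl⟩

lemma layer_meas {μ : Measure ℝ} {f g : ℝ → ℝ} (hfm : Measurable f) (hgm : Measurable g) :
    ∫⁻ x, ENNReal.ofReal (f x) * ENNReal.ofReal (g x) ∂μ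
      = ∫⁻ s in Ioi (0:ℝ), ∫⁻ t in Ioi (0:ℝ), μ {x | s < f x ∧ t < g x} := by
  set w : ℝ → ℝ≥0∞ := fun x => ENNReal.ofReal (g x) with hw
  have hwm : Measurable w := ENNReal.measurable_ofReal.comp hgm
  have h1 : ∫⁻ x, ENNReal.ofReal (f x) * ENNReal.ofReal (g x) ∂μ
      = ∫⁻ x, ENNReal.ofReal (f x) ∂(μ.withDensity w) := by
    have hfo : Measurable fun x => ENNReal.ofReal (f x) := ENNReal.measurable_ofReal.comp hfm
    rw [lintegral_withDensity_eq_lintegral_mul μ hwm hfo]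
    simp only [Pi.mul_apply]
    exact lintegral_congr fun x => (mul_comm _ _)
  rw [h1, single_layer hfm.aemeasurable]
  refine setLIntegral_congr_fun measurableSet_Ioi (fun s _ => ?_)
  have hSmeas : MeasurableSet {x | s < f x} := measurableSet_lt measurable_const hfm
  rw [withDensity_apply w hSmeas]
  have h2 : ∫⁻ x in {x | s < f x}, w x ∂μ
      = ∫⁻ t in Ioi (0:ℝ), (μ.restrict {x | s < f x}) {x | t < g x} :=
    single_layer hgm.aemeasurable
  rw [h2]
  refine setLIntegral_congr_fun measurableSet_Ioi (fun t _ => ?_)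
  rw [Measure.restrict_apply (measurableSet_lt measurable_const hgm)]
  congr 1
  ext x
  simp only [Set.mem_inter_iff, Set.mem_setOf_eq]
  tauto

lemma layer_ae {μ : Measure ℝ} {f g : ℝ → ℝ} (hf : AEMeasurable f μ) (hg : AEMeasurable g μ) :
    ∫⁻ x, ENNReal.ofReal (f x) * ENNReal.ofReal (g x) ∂μ
      = ∫⁻ s in Ioi (0:ℝ), ∫⁻ t in Ioi (0:ℝ), μ {x | s < f x ∧ t < g x} := by
  set f' := hf.mk f with hf'
  set g' := hg.mk g with hg'
  have hae : ∀ᵐ x ∂μ, f x = f' x ∧ g x = g' x := hf.ae_eq_mk.and hg.ae_eq_mk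
  have hL : ∫⁻ x, ENNReal.ofReal (f x) * ENNReal.ofReal (g x) ∂μ
      = ∫⁻ x, ENNReal.ofReal (f' x) * ENNReal.ofReal (g' x) ∂μ := by
    refine lintegral_congr_ae (hae.mono fun x hx => ?_)
    simp only [hx.1, hx.2]
  have hR : ∀ s t : ℝ, μ {x | s < f x ∧ t < g x} = μ {x | s < f' x ∧ t < g' x} := by
    intro s t
    refine measure_congr (Filter.eventuallyEq_set.2 (hae.mono fun x hx => ?_))
    simp only [Set.mem_setOf_eq, hx.1, hx.2]
  rw [hL, layer_meas hf.measurable_mk hg.measurable_mk]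
  exact lintegral_congr fun s => lintegral_congr fun t => (hR s t).symm

/- ### Pointwise comparison of joint level-set measures -/

lemma pt_min_up {h₁ h₂ : ℝ → ℝ} {Q₁ Q₂ : ℝ → Prop} (H₁ : SymNonInc h₁) (H₂ : SymNonInc h₂)
    (u₁ : UpClosed Q₁) (u₂ : UpClosed Q₂) :
    μc {x | Q₁ (h₁ x) ∧ Q₂ (h₂ x)} = min (μc {x | Q₁ (h₁ x)}) (μc {x | Q₂ (h₂ x)}) := by
  rw [Set.setOf_and]
  exact meas_inter_min (nested_up H₁ H₂ u₁ u₂)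

lemma pt_min_down {h₁ h₂ : ℝ → ℝ} {Q₁ Q₂ : ℝ → Prop} (H₁ : SymNonInc h₁) (H₂ : SymNonInc h₂)
    (u₁ : DownClosed Q₁) (u₂ : DownClosed Q₂) :
    μc {x | Q₁ (h₁ x) ∧ Q₂ (h₂ x)} = min (μc {x | Q₁ (h₁ x)}) (μc {x | Q₂ (h₂ x)}) := by
  rw [Set.setOf_and]
  exact meas_inter_min (nested_down H₁ H₂ u₁ u₂)

lemma pt_cross {u v us vs : ℝ → ℝ} (Hus : SymNonInc us) (Hvs : SymNonInc vs)
    (hvsa : AEMeasurable vs μc)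
    (hdu : ∀ a : ℝ, μc {x | a < us x} = μc {x | a < u x})
    (hdv : ∀ a : ℝ, μc {x | a ≤ vs x} = μc {x | a ≤ v x}) (s t : ℝ) :
    μc ({x | s < us x} \ {x | t ≤ vs x}) ≤ μc ({x | s < u x} \ {x | t ≤ v x}) := by
  have uQ1 : UpClosed (fun w => s < w) := fun a b ha hab => lt_of_lt_of_le ha hab
  have uQ2 : UpClosed (fun w => t ≤ w) := fun a b ha hab => le_trans ha hab
  have hdiff : ∀ (A B : Set ℝ), (A \ B) ∩ circ = (A ∩ circ) \ (B ∩ circ) := by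
    intro A B; ext x; simp only [Set.mem_inter_iff, Set.mem_diff]; tauto
  rcases nested_up (Q₁ := fun w => s < w) (Q₂ := fun w => t ≤ w) Hus Hvs uQ1 uQ2 with hs | hs
  · have hzero : μc ({x | s < us x} \ {x | t ≤ vs x}) = 0 := by
      rw [← μc_inter_circ ({x | s < us x} \ {x | t ≤ vs x}), hdiff, diff_eq_empty.2 hs,
        measure_empty]
    rw [hzero]
    exact zero_le
  · have hnm : NullMeasurableSet ({x | t ≤ vs x} ∩ circ) μc := by
      have he : {x | t ≤ vs x} = vs ⁻¹' Ici t := by ext x; simp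
      rw [he]
      exact (hvsa.nullMeasurable measurableSet_Ici).inter circ_meas.nullMeasurableSet
    have hL : μc ({x | s < us x} \ {x | t ≤ vs x})
        = μc {x | s < us x} - μc {x | t ≤ vs x} := by
      rw [← μc_inter_circ ({x | s < us x} \ {x | t ≤ vs x}), hdiff,
        measure_diff hs hnm (measure_ne_top _ _), μc_inter_circ, μc_inter_circ]
    rw [hL, hdu s, hdv t]
    exact le_measure_diff

/-- **Hardy–Littlewood inequality on the circle**:
`∫_S f g ≤ ∫_S f* g*` for conjugate exponents `p, q`. -/
theorem statement3 (p q : ℝ≥0∞) (hp : 1 ≤ p) (hq : 1 ≤ q) (hpq : 1/p + 1/q = 1)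
    (f g fs gs : ℝ → ℝ) (hfm : Measurable f) (hgm : Measurable g)
    (hf : eLpNorm f p μc < ⊤) (hg : eLpNorm g q μc < ⊤)
    (hfs : IsRearrangement f fs) (hgs : IsRearrangement g gs) :
    ∫ x in circ, f x * g x ≤ ∫ x in circ, fs x * gs x := by
  obtain ⟨Hfs, hdf⟩ := hfs
  obtain ⟨Hgs, hdg⟩ := hgs
  have hfsa : AEMeasurable fs μc := Hfs.aemeasurable
  have hgsa : AEMeasurable gs μc := Hgs.aemeasurable
  have hfa : AEMeasurable f μc := hfm.aemeasurable
  have hga : AEMeasurable g μc := hgm.aemeasurable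
  -- distribution transfers
  have dfgt : ∀ a : ℝ, μc {x | a < fs x} = μc {x | a < f x} := d_gt hfsa hfa hdf
  have dflt : ∀ a : ℝ, μc {x | fs x < a} = μc {x | f x < a} := d_lt hfsa hdf
  have dfge : ∀ a : ℝ, μc {x | a ≤ fs x} = μc {x | a ≤ f x} := d_ge hfsa hfa hdf
  have dggt : ∀ a : ℝ, μc {x | a < gs x} = μc {x | a < g x} := d_gt hgsa hga hdg
  have dglt : ∀ a : ℝ, μc {x | gs x < a} = μc {x | g x < a} := d_lt hgsa hdg
  have dgge : ∀ a : ℝ, μc {x | a ≤ gs x} = μc {x | a ≤ g x} := d_ge hgsa hga hdg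
  have dfneg : ∀ s : ℝ, μc {x | s < -fs x} = μc {x | s < -f x} := by
    intro s
    have h1 : {x | s < -fs x} = {x | fs x < -s} := by ext x; simp only [Set.mem_setOf_eq]; constructor <;> intro <;> linarith
    have h2 : {x | s < -f x} = {x | f x < -s} := by ext x; simp only [Set.mem_setOf_eq]; constructor <;> intro <;> linarith
    rw [h1, h2]; exact dflt (-s)
  have dgneg : ∀ s : ℝ, μc {x | s < -gs x} = μc {x | s < -g x} := by
    intro s
    have h1 : {x | s < -gs x} = {x | gs x < -s} := by ext x; simp only [Set.mem_setOf_eq]; constructor <;> intro <;> linarith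
    have h2 : {x | s < -g x} = {x | g x < -s} := by ext x; simp only [Set.mem_setOf_eq]; constructor <;> intro <;> linarith
    rw [h1, h2]; exact dglt (-s)
  -- eLpNorm equality
  have hmap : Measure.map fs μc = Measure.map f μc := by
    haveI : IsFiniteMeasure (Measure.map fs μc) := by
      constructor
      rw [Measure.map_apply_of_aemeasurable hfsa MeasurableSet.univ, Set.preimage_univ]
      exact measure_lt_top _ _
    refine Measure.ext_of_Iic _ _ fun a => ?_
    rw [Measure.map_apply_of_aemeasurable hfsa measurableSet_Iic,
      Measure.map_apply_of_aemeasurable hfa measurableSet_Iic]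
    have h1 : fs ⁻¹' Iic a = {x | fs x ≤ a} := by ext x; simp
    have h2 : f ⁻¹' Iic a = {x | f x ≤ a} := by ext x; simp
    rw [h1, h2]; exact hdf a
  have hgmap : Measure.map gs μc = Measure.map g μc := by
    haveI : IsFiniteMeasure (Measure.map gs μc) := by
      constructor
      rw [Measure.map_apply_of_aemeasurable hgsa MeasurableSet.univ, Set.preimage_univ]
      exact measure_lt_top _ _
    refine Measure.ext_of_Iic _ _ fun a => ?_
    rw [Measure.map_apply_of_aemeasurable hgsa measurableSet_Iic,
      Measure.map_apply_of_aemeasurable hga measurableSet_Iic]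
    have h1 : gs ⁻¹' Iic a = {x | gs x ≤ a} := by ext x; simp
    have h2 : g ⁻¹' Iic a = {x | g x ≤ a} := by ext x; simp
    rw [h1, h2]; exact hdg a
  have hfsnorm : eLpNorm fs p μc = eLpNorm f p μc := by
    calc eLpNorm fs p μc = eLpNorm (id ∘ fs) p μc := rfl
    _ = eLpNorm id p (Measure.map fs μc) := (eLpNorm_map_measure aestronglyMeasurable_id hfsa).symm
    _ = eLpNorm id p (Measure.map f μc) := by rw [hmap]
    _ = eLpNorm (id ∘ f) p μc := eLpNorm_map_measure aestronglyMeasurable_id hfa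
    _ = eLpNorm f p μc := rfl
  have hgsnorm : eLpNorm gs q μc = eLpNorm g q μc := by
    calc eLpNorm gs q μc = eLpNorm (id ∘ gs) q μc := rfl
    _ = eLpNorm id q (Measure.map gs μc) := (eLpNorm_map_measure aestronglyMeasurable_id hgsa).symm
    _ = eLpNorm id q (Measure.map g μc) := by rw [hgmap]
    _ = eLpNorm (id ∘ g) q μc := eLpNorm_map_measure aestronglyMeasurable_id hga
    _ = eLpNorm g q μc := rfl
  -- Memℒp
  have hfL : MemLp f p μc := ⟨hfm.aestronglyMeasurable, hf⟩
  have hgL : MemLp g q μc := ⟨hgm.aestronglyMeasurable, hg⟩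
  have hfsL : MemLp fs p μc := ⟨hfsa.aestronglyMeasurable, by rw [hfsnorm]; exact hf⟩
  have hgsL : MemLp gs q μc := ⟨hgsa.aestronglyMeasurable, by rw [hgsnorm]; exact hg⟩
  -- Hölder
  have hold : ∀ (u v : ℝ → ℝ), MemLp u p μc → MemLp v q μc →
      Integrable (fun x => u x * v x) μc := by
    intro u v hu hv
    rw [← memLp_one_iff_integrable]
    have hT : ENNReal.HolderTriple p q 1 := ⟨by simpa [one_div] using hpq⟩
    refine ⟨hu.1.mul hv.1, lt_of_le_of_lt
      (eLpNorm_le_eLpNorm_mul_eLpNorm'_of_norm hu.1 hv.1 (· * ·) 1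
        (ae_of_all _ fun x => by simp [norm_mul]))
      (by simpa using ENNReal.mul_lt_top hu.2 hv.2)⟩
  -- positive parts are in ℒp
  have memP : ∀ (u : ℝ → ℝ) (r : ℝ≥0∞), MemLp u r μc → MemLp (fun x => max (u x) 0) r μc := by
    intro u r hu
    refine hu.of_le ((hu.1.aemeasurable.max aemeasurable_const).aestronglyMeasurable)
      (ae_of_all _ fun x => ?_)
    rw [Real.norm_eq_abs, Real.norm_eq_abs, abs_of_nonneg (le_max_right _ _)]
    exact max_le (le_abs_self _) (abs_nonneg _)
  have memF1 : MemLp (fun x => max (f x) 0) p μc := memP f p hfL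
  have memF2 : MemLp (fun x => max (-f x) 0) p μc := memP _ p hfL.neg
  have memG1 : MemLp (fun x => max (g x) 0) q μc := memP g q hgL
  have memG2 : MemLp (fun x => max (-g x) 0) q μc := memP _ q hgL.neg
  have memFs1 : MemLp (fun x => max (fs x) 0) p μc := memP fs p hfsL
  have memFs2 : MemLp (fun x => max (-fs x) 0) p μc := memP _ p hfsL.neg
  have memGs1 : MemLp (fun x => max (gs x) 0) q μc := memP gs q hgsL
  have memGs2 : MemLp (fun x => max (-gs x) 0) q μc := memP _ q hgsL.neg
  -- the eight integrable products
  have int11 := hold _ _ memF1 memG1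
  have int22 := hold _ _ memF2 memG2
  have int12 := hold _ _ memF1 memG2
  have int21 := hold _ _ memF2 memG1
  have ints11 := hold _ _ memFs1 memGs1
  have ints22 := hold _ _ memFs2 memGs2
  have ints12 := hold _ _ memFs1 memGs2
  have ints21 := hold _ _ memFs2 memGs1
  -- ofReal identities
  have ofReal_eq : ∀ (u v : ℝ → ℝ) (x : ℝ),
      ENNReal.ofReal (max (u x) 0 * max (v x) 0)
        = ENNReal.ofReal (u x) * ENNReal.ofReal (v x) := by
    intro u v x
    rw [ENNReal.ofReal_mul (le_max_right _ _), ofReal_max0, ofReal_max0]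
  -- integral conversion
  have intconv : ∀ (u v : ℝ → ℝ), AEMeasurable u μc → AEMeasurable v μc →
      ∫ x, max (u x) 0 * max (v x) 0 ∂μc
        = (∫⁻ x, ENNReal.ofReal (u x) * ENNReal.ofReal (v x) ∂μc).toReal := by
    intro u v hu hv
    rw [integral_eq_lintegral_of_nonneg_ae
      (ae_of_all _ fun x => mul_nonneg (le_max_right _ _) (le_max_right _ _))
      (((hu.max aemeasurable_const).mul (hv.max aemeasurable_const)).aestronglyMeasurable)]
    congr 1
    exact lintegral_congr fun x => ofReal_eq u v x
  -- finiteness of the four key lintegrals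
  have finconv : ∀ (u v : ℝ → ℝ), Integrable (fun x => max (u x) 0 * max (v x) 0) μc →
      (∫⁻ x, ENNReal.ofReal (u x) * ENNReal.ofReal (v x) ∂μc) ≠ ⊤ := by
    intro u v hint
    have h := hint.lintegral_lt_top
    rw [lintegral_congr fun x => ofReal_eq u v x] at h
    exact h.ne
  have hA'fin := finconv fs gs ints11
  have hB'fin := finconv (fun x => -fs x) (fun x => -gs x) ints22
  have hCfin := finconv f (fun x => -g x) int12
  have hDfin := finconv (fun x => -f x) g int21
  -- the four lintegral inequalities
  have hAle : (∫⁻ x, ENNReal.ofReal (f x) * ENNReal.ofReal (g x) ∂μc)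
      ≤ ∫⁻ x, ENNReal.ofReal (fs x) * ENNReal.ofReal (gs x) ∂μc := by
    calc ∫⁻ x, ENNReal.ofReal (f x) * ENNReal.ofReal (g x) ∂μc
        = ∫⁻ s in Ioi (0:ℝ), ∫⁻ t in Ioi (0:ℝ), μc {x | s < f x ∧ t < g x} := layer_ae hfa hga
      _ ≤ ∫⁻ s in Ioi (0:ℝ), ∫⁻ t in Ioi (0:ℝ), μc {x | s < fs x ∧ t < gs x} := by
          refine lintegral_mono fun s => lintegral_mono fun t => ?_
          calc μc {x | s < f x ∧ t < g x}
              ≤ min (μc {x | s < f x}) (μc {x | t < g x}) :=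
                le_min (measure_mono fun x hx => hx.1) (measure_mono fun x hx => hx.2)
            _ = min (μc {x | s < fs x}) (μc {x | t < gs x}) := by rw [dfgt s, dggt t]
            _ = μc {x | s < fs x ∧ t < gs x} :=
                (pt_min_up Hfs Hgs (fun a b ha hab => lt_of_lt_of_le ha hab)
                  (fun a b ha hab => lt_of_lt_of_le ha hab)).symm
      _ = ∫⁻ x, ENNReal.ofReal (fs x) * ENNReal.ofReal (gs x) ∂μc := (layer_ae hfsa hgsa).symm
  have hBle : (∫⁻ x, ENNReal.ofReal (-f x) * ENNReal.ofReal (-g x) ∂μc)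
      ≤ ∫⁻ x, ENNReal.ofReal (-fs x) * ENNReal.ofReal (-gs x) ∂μc := by
    calc ∫⁻ x, ENNReal.ofReal (-f x) * ENNReal.ofReal (-g x) ∂μc
        = ∫⁻ s in Ioi (0:ℝ), ∫⁻ t in Ioi (0:ℝ), μc {x | s < -f x ∧ t < -g x} :=
          layer_ae hfa.neg hga.neg
      _ ≤ ∫⁻ s in Ioi (0:ℝ), ∫⁻ t in Ioi (0:ℝ), μc {x | s < -fs x ∧ t < -gs x} := by
          refine lintegral_mono fun s => lintegral_mono fun t => ?_
          calc μc {x | s < -f x ∧ t < -g x}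
              ≤ min (μc {x | s < -f x}) (μc {x | t < -g x}) :=
                le_min (measure_mono fun x hx => hx.1) (measure_mono fun x hx => hx.2)
            _ = min (μc {x | s < -fs x}) (μc {x | t < -gs x}) := by
                rw [dfneg s, dgneg t]
            _ = μc {x | s < -fs x ∧ t < -gs x} :=
                (pt_min_down (Q₁ := fun w => s < -w) (Q₂ := fun w => t < -w) Hfs Hgs
                  (fun a b ha hab => by dsimp at *; linarith)
                  (fun a b ha hab => by dsimp at *; linarith)).symm
      _ = ∫⁻ x, ENNReal.ofReal (-fs x) * ENNReal.ofReal (-gs x) ∂μc :=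
          (layer_ae hfsa.neg hgsa.neg).symm
  have diffform : ∀ (u v : ℝ → ℝ) (s t : ℝ),
      {x | s < u x ∧ t < -v x} = {x | s < u x} \ {x | -t ≤ v x} := by
    intro u v s t
    ext x
    simp only [Set.mem_setOf_eq, Set.mem_diff, not_le]
    constructor
    · rintro ⟨h1, h2⟩; exact ⟨h1, by linarith⟩
    · rintro ⟨h1, h2⟩; exact ⟨h1, by linarith⟩
  have hCge : (∫⁻ x, ENNReal.ofReal (fs x) * ENNReal.ofReal (-gs x) ∂μc)
      ≤ ∫⁻ x, ENNReal.ofReal (f x) * ENNReal.ofReal (-g x) ∂μc := by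
    calc ∫⁻ x, ENNReal.ofReal (fs x) * ENNReal.ofReal (-gs x) ∂μc
        = ∫⁻ s in Ioi (0:ℝ), ∫⁻ t in Ioi (0:ℝ), μc {x | s < fs x ∧ t < -gs x} :=
          layer_ae hfsa hgsa.neg
      _ ≤ ∫⁻ s in Ioi (0:ℝ), ∫⁻ t in Ioi (0:ℝ), μc {x | s < f x ∧ t < -g x} := by
          refine lintegral_mono fun s => lintegral_mono fun t => ?_
          calc μc {x | s < fs x ∧ t < -gs x}
              = μc ({x | s < fs x} \ {x | -t ≤ gs x}) := congrArg μc (diffform fs gs s t)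
            _ ≤ μc ({x | s < f x} \ {x | -t ≤ g x}) := pt_cross Hfs Hgs hgsa dfgt dgge s (-t)
            _ = μc {x | s < f x ∧ t < -g x} := (congrArg μc (diffform f g s t)).symm
      _ = ∫⁻ x, ENNReal.ofReal (f x) * ENNReal.ofReal (-g x) ∂μc := (layer_ae hfa hga.neg).symm
  have diffform2 : ∀ (u v : ℝ → ℝ) (s t : ℝ),
      {x | s < -u x ∧ t < v x} = {x | t < v x} \ {x | -s ≤ u x} := by
    intro u v s t
    ext x
    simp only [Set.mem_setOf_eq, Set.mem_diff, not_le]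
    constructor
    · rintro ⟨h1, h2⟩; exact ⟨h2, by linarith⟩
    · rintro ⟨h1, h2⟩; exact ⟨by linarith, h1⟩
  have hDge : (∫⁻ x, ENNReal.ofReal (-fs x) * ENNReal.ofReal (gs x) ∂μc)
      ≤ ∫⁻ x, ENNReal.ofReal (-f x) * ENNReal.ofReal (g x) ∂μc := by
    calc ∫⁻ x, ENNReal.ofReal (-fs x) * ENNReal.ofReal (gs x) ∂μc
        = ∫⁻ s in Ioi (0:ℝ), ∫⁻ t in Ioi (0:ℝ), μc {x | s < -fs x ∧ t < gs x} :=
          layer_ae hfsa.neg hgsa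
      _ ≤ ∫⁻ s in Ioi (0:ℝ), ∫⁻ t in Ioi (0:ℝ), μc {x | s < -f x ∧ t < g x} := by
          refine lintegral_mono fun s => lintegral_mono fun t => ?_
          calc μc {x | s < -fs x ∧ t < gs x}
              = μc ({x | t < gs x} \ {x | -s ≤ fs x}) := congrArg μc (diffform2 fs gs s t)
            _ ≤ μc ({x | t < g x} \ {x | -s ≤ f x}) := pt_cross Hgs Hfs hfsa dggt dfge t (-s)
            _ = μc {x | s < -f x ∧ t < g x} := (congrArg μc (diffform2 f g s t)).symm
      _ = ∫⁻ x, ENNReal.ofReal (-f x) * ENNReal.ofReal (g x) ∂μc := (layer_ae hfa.neg hga).symm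
  -- decompose the product
  have maxhalf : ∀ a : ℝ, max a 0 = (a + |a|)/2 := by
    intro a
    rcases abs_cases a with ⟨h, h'⟩ | ⟨h, h'⟩
    · rw [max_eq_left h', h]; ring
    · rw [max_eq_right h'.le, h]; ring
  have key : ∀ (u v : ℝ → ℝ), (fun x => u x * v x)
      = fun x => max (u x) 0 * max (v x) 0 + max (-u x) 0 * max (-v x) 0
          - max (u x) 0 * max (-v x) 0 - max (-u x) 0 * max (v x) 0 := by
    intro u v
    funext x
    simp only [maxhalf, abs_neg]
    ring
  -- expand both integrals
  have expand : ∀ (u v : ℝ → ℝ),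
      Integrable (fun x => max (u x) 0 * max (v x) 0) μc →
      Integrable (fun x => max (-u x) 0 * max (-v x) 0) μc →
      Integrable (fun x => max (u x) 0 * max (-v x) 0) μc →
      Integrable (fun x => max (-u x) 0 * max (v x) 0) μc →
      ∫ x, u x * v x ∂μc
        = ∫ x, max (u x) 0 * max (v x) 0 ∂μc + ∫ x, max (-u x) 0 * max (-v x) 0 ∂μc
          - ∫ x, max (u x) 0 * max (-v x) 0 ∂μc - ∫ x, max (-u x) 0 * max (v x) 0 ∂μc := by
    intro u v h11 h22 h12 h21
    have e3 : ∫ x, (max (u x) 0 * max (v x) 0 + max (-u x) 0 * max (-v x) 0) ∂μc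
        = ∫ x, max (u x) 0 * max (v x) 0 ∂μc + ∫ x, max (-u x) 0 * max (-v x) 0 ∂μc :=
      integral_add h11 h22
    have e2 : ∫ x, (max (u x) 0 * max (v x) 0 + max (-u x) 0 * max (-v x) 0
          - max (u x) 0 * max (-v x) 0) ∂μc
        = (∫ x, (max (u x) 0 * max (v x) 0 + max (-u x) 0 * max (-v x) 0) ∂μc)
          - ∫ x, max (u x) 0 * max (-v x) 0 ∂μc :=
      integral_sub (h11.add h22) h12
    have e1 : ∫ x, (max (u x) 0 * max (v x) 0 + max (-u x) 0 * max (-v x) 0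
          - max (u x) 0 * max (-v x) 0 - max (-u x) 0 * max (v x) 0) ∂μc
        = (∫ x, (max (u x) 0 * max (v x) 0 + max (-u x) 0 * max (-v x) 0
            - max (u x) 0 * max (-v x) 0) ∂μc)
          - ∫ x, max (-u x) 0 * max (v x) 0 ∂μc :=
      integral_sub ((h11.add h22).sub h12) h21
    rw [key u v]
    rw [e1, e2, e3]
  have EfG := expand f g int11 int22 int12 int21
  have EfsGs := expand fs gs ints11 ints22 ints12 ints21
  show (∫ x, f x * g x ∂μc) ≤ ∫ x, fs x * gs x ∂μc
  rw [EfG, EfsGs, intconv f g hfa hga, intconv (fun x => -f x) (fun x => -g x) hfa.neg hga.neg, intconv f (fun x => -g x) hfa hga.neg,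
    intconv (fun x => -f x) g hfa.neg hga, intconv fs gs hfsa hgsa, intconv (fun x => -fs x) (fun x => -gs x) hfsa.neg hgsa.neg,
    intconv fs (fun x => -gs x) hfsa hgsa.neg, intconv (fun x => -fs x) gs hfsa.neg hgsa]
  have tA := ENNReal.toReal_mono hA'fin hAle
  have tB := ENNReal.toReal_mono hB'fin hBle
  have tC := ENNReal.toReal_mono hCfin hCge
  have tD := ENNReal.toReal_mono hDfin hDge
  linarith
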